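/- Suppose the static problem has the strong duality property: there exists φ_s such that the Lagrangian L(y,u) := f⁰(y,u) + ⟨A*φ_s, y⟩ + ⟨φ_s, f(y,u)⟩ satisfies L(y,u) ≥ L(y_s,u_s) = f⁰(y_s,u_s) for all (y,u) ∈ E × F. Then for any mild solution (y(·),u(·)) of the evolution equation with values in E × F on [0,T], the function S(y) := -⟨φ_s, y⟩ is a storage function: S(y(0)) + ∫₀^τ (f⁰(y(t),u(t)) - f⁰(y_s,u_s)) dt ≥ S(y(τ)) for all τ ∈ [0,T]. -/

import Mathlib

open MeasureTheory Set

/-- Strong duality for the static problem implies dissipativity of the dynamic problem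
with the linear storage function `S(y) = -⟨φ_s, y⟩`. -/
theorem stmt_7
    {X U : Type*} [NormedAddCommGroup X] [NormedSpace ℝ X]
    (f0 : X → U → ℝ) (f : X → U → X) (E : Set X) (F : Set U)
    (ys : X) (us : U) (hys : ys ∈ E) (hus : us ∈ F)
    (φs : X →L[ℝ] ℝ)       -- Lagrange multiplier
    (Aφ : X →L[ℝ] ℝ)       -- the functional y ↦ ⟨A*φ_s, y⟩
    -- (y_s,u_s) is a steady state in the weak sense (tested against φ_s)
    (hsteady : Aφ ys + φs (f ys us) = 0)
    -- strong duality: (y_s,u_s) minimizes the Lagrangian on E × F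
    (hSD : ∀ y ∈ E, ∀ u ∈ F,
      f0 y u + Aφ y + φs (f y u) ≥ f0 ys us + Aφ ys + φs (f ys us))
    (T : ℝ) (hT : 0 < T) (y : ℝ → X) (u : ℝ → U)
    -- (y,u) takes values in E × F
    (hyE : ∀ t ∈ Icc (0:ℝ) T, y t ∈ E) (huF : ∀ t ∈ Icc (0:ℝ) T, u t ∈ F)
    -- mild/weak solution of ẏ = Ay + f(y,u), tested against φ_s
    (hmild : ∀ τ ∈ Icc (0:ℝ) T,
      φs (y τ) - φs (y 0) = ∫ t in (0:ℝ)..τ, (Aφ (y t) + φs (f (y t) (u t))))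
    (hintg : IntegrableOn (fun t => f0 (y t) (u t)) (Icc (0:ℝ) T))
    (hintg' : IntegrableOn (fun t => Aφ (y t) + φs (f (y t) (u t))) (Icc (0:ℝ) T)) :
    ∀ τ ∈ Icc (0:ℝ) T,
      (-(φs (y 0))) + ∫ t in (0:ℝ)..τ, (f0 (y t) (u t) - f0 ys us) ≥ -(φs (y τ)) := by
  intro τ hτ
  obtain ⟨hτ0, hτT⟩ := hτ
  have hsub : Icc (0:ℝ) τ ⊆ Icc (0:ℝ) T := Icc_subset_Icc le_rfl hτT
  have hI1 : IntervalIntegrable (fun t => f0 (y t) (u t) - f0 ys us) volume 0 τ := by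
    apply IntegrableOn.intervalIntegrable
    rw [uIcc_of_le hτ0]
    exact ((hintg.mono_set hsub).sub (integrableOn_const measure_Icc_lt_top.ne))
  have hI2 : IntervalIntegrable (fun t => Aφ (y t) + φs (f (y t) (u t))) volume 0 τ := by
    apply IntegrableOn.intervalIntegrable
    rw [uIcc_of_le hτ0]
    exact hintg'.mono_set hsub
  have key : 0 ≤ ∫ t in (0:ℝ)..τ,
      ((f0 (y t) (u t) - f0 ys us) + (Aφ (y t) + φs (f (y t) (u t)))) := by
    apply intervalIntegral.integral_nonneg hτ0
    intro t ht
    have ht' : t ∈ Icc (0:ℝ) T := hsub ht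
    have := hSD (y t) (hyE t ht') (u t) (huF t ht')
    linarith [hsteady]
  rw [intervalIntegral.integral_add hI1 hI2] at key
  have hm := hmild τ ⟨hτ0, hτT⟩
  linarith
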